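/- (Greenbaum–Gurvits, Joubert) Let A ∈ ℂ^{N×N} be a nonsingular normal matrix with eigenvalues λ₁,…,λ_N. Then for every k ≥ 0 there exists a nonzero vector r₀ ∈ ℂ^N such that min over p ∈ P_k(0) of ‖p(A)r₀‖₂ equals ‖r₀‖₂ times min over p ∈ P_k(0) of max over 1 ≤ i ≤ N of |p(λ_i)|; i.e., for normal matrices the eigenvalue min-max bound on the GMRES residual is sharp at every step. -/

import Mathlib

open Matrix Polynomial

/-- The Euclidean norm of a complex vector. -/
noncomputable def cenorm {N : ℕ} (v : Fin N → ℂ) : ℝ :=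
  Real.sqrt (∑ i, ‖v i‖ ^ 2)

noncomputable def vqL (N k : ℕ) (lam : Fin N → ℂ) : (Fin k → ℂ) →ₗ[ℂ] (Fin N → ℂ) where
  toFun z := fun i => ∑ j : Fin k, z j * lam i ^ ((j : ℕ) + 1)
  map_add' := by
    intro z w; funext i; simp [add_mul, Finset.sum_add_distrib]
  map_smul' := by
    intro c z; funext i; simp [Finset.mul_sum, mul_assoc]

lemma vqL_apply (N k : ℕ) (lam : Fin N → ℂ) (z : Fin k → ℂ) (i : Fin N) :
    vqL N k lam z i = ∑ j : Fin k, z j * lam i ^ ((j : ℕ) + 1) := rfl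


lemma cenorm_nonneg {N : ℕ} (v : Fin N → ℂ) : 0 ≤ cenorm v := Real.sqrt_nonneg _

lemma cenorm_eq_zero {N : ℕ} {v : Fin N → ℂ} (h : cenorm v = 1) : v ≠ 0 := by
  intro hv
  rw [hv] at h
  simp [cenorm] at h

/-- sup over Fin N of abs equals Pi sup norm -/
lemma iSup_abs_eq_norm {N : ℕ} (hN : 0 < N) (v : Fin N → ℂ) :
    (⨆ i, ‖v i‖) = ‖v‖ := by
  haveI : Nonempty (Fin N) := ⟨⟨0, hN⟩⟩
  apply le_antisymm
  · exact ciSup_le fun i => by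
      exact norm_le_pi_norm v i
  · obtain ⟨i, _, hi⟩ := Finset.exists_mem_eq_sup Finset.univ Finset.univ_nonempty
      (fun b => ‖v b‖₊)
    rw [Pi.norm_def, hi]
    have h2 : ((‖v i‖₊ : NNReal) : ℝ) = ‖v i‖ := by simp
    rw [h2]
    exact le_ciSup (f := fun j => ‖v j‖) (Set.Finite.bddAbove (Set.finite_range _)) i

lemma norm_attained {N : ℕ} (hN : 0 < N) (v : Fin N → ℂ) :
    ∃ i, ‖v i‖ = ‖v‖ := by
  haveI : Nonempty (Fin N) := ⟨⟨0, hN⟩⟩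
  obtain ⟨i, _, hi⟩ := Finset.exists_mem_eq_sup Finset.univ Finset.univ_nonempty
    (fun b => ‖v b‖₊)
  exact ⟨i, by rw [Pi.norm_def, hi]; simp⟩

lemma abs_le_norm {N : ℕ} (v : Fin N → ℂ) (i : Fin N) : ‖v i‖ ≤ ‖v‖ := by
  exact norm_le_pi_norm v i

lemma cenorm_mulVec {N : ℕ} (U : Matrix (Fin N) (Fin N) ℂ) (hU : Uᴴ * U = 1)
    (x : Fin N → ℂ) : cenorm (U *ᵥ x) = cenorm x := by
  have key : (∑ i, (starRingEnd ℂ) ((U *ᵥ x) i) * (U *ᵥ x) i)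
      = ∑ i, (starRingEnd ℂ) (x i) * x i := by
    have h1 : dotProduct (star (U *ᵥ x)) (U *ᵥ x)
        = dotProduct (star x) x := by
      rw [Matrix.star_mulVec, ← Matrix.dotProduct_mulVec, Matrix.mulVec_mulVec, hU,
        Matrix.one_mulVec]
    simpa [dotProduct, Pi.star_apply] using h1
  have key2 : (∑ i, ‖(U *ᵥ x) i‖ ^ 2) = ∑ i, ‖x i‖ ^ 2 := by
    have := key
    have h3 : ∀ (w : Fin N → ℂ), (∑ i, (starRingEnd ℂ) (w i) * w i)
        = ((∑ i, ‖w i‖ ^ 2 : ℝ) : ℂ) := by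
      intro w
      push_cast
      congr 1; funext i
      rw [mul_comm, Complex.mul_conj]
      norm_cast
      rw [Complex.sq_norm]
    rw [h3, h3] at this
    exact_mod_cast this
  unfold cenorm
  rw [key2]
noncomputable def qpoly (k : ℕ) (z : Fin k → ℂ) : Polynomial ℂ :=
  ∑ j : Fin k, Polynomial.C (z j) * Polynomial.X ^ ((j : ℕ) + 1)

lemma qpoly_natDegree_le (k : ℕ) (z : Fin k → ℂ) : (qpoly k z).natDegree ≤ k := by
  apply Polynomial.natDegree_sum_le_of_forall_le
  intro j _
  refine le_trans (Polynomial.natDegree_C_mul_le _ _) ?_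
  rw [Polynomial.natDegree_X_pow]
  exact j.2

lemma qpoly_eval (k : ℕ) (z : Fin k → ℂ) (x : ℂ) :
    (qpoly k z).eval x = ∑ j : Fin k, z j * x ^ ((j : ℕ) + 1) := by
  simp [qpoly, Polynomial.eval_finset_sum]

noncomputable def ppoly (k : ℕ) (z : Fin k → ℂ) : Polynomial ℂ :=
  Polynomial.C 1 + qpoly k z

lemma ppoly_natDegree_le (k : ℕ) (z : Fin k → ℂ) : (ppoly k z).natDegree ≤ k := by
  refine le_trans (Polynomial.natDegree_add_le _ _) ?_
  simp [qpoly_natDegree_le]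

lemma ppoly_eval_zero (k : ℕ) (z : Fin k → ℂ) : (ppoly k z).eval 0 = 1 := by
  simp [ppoly, qpoly_eval]

lemma ppoly_eval (k : ℕ) (z : Fin k → ℂ) (x : ℂ) :
    (ppoly k z).eval x = 1 + ∑ j : Fin k, z j * x ^ ((j : ℕ) + 1) := by
  simp [ppoly, qpoly_eval]

lemma eval_param {k : ℕ} {p : Polynomial ℂ} (hd : p.natDegree ≤ k) (h0 : p.eval 0 = 1)
    (x : ℂ) : p.eval x = 1 + ∑ j : Fin k, p.coeff ((j : ℕ) + 1) * x ^ ((j : ℕ) + 1) := by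
  have h1 : p.eval x = ∑ i ∈ Finset.range (k + 1), p.coeff i * x ^ i := by
    rw [Polynomial.eval_eq_sum_range' (Nat.lt_succ_of_le hd)]
  rw [h1, Finset.sum_range_succ']
  have h2 : p.coeff 0 * x ^ 0 = 1 := by
    rw [Polynomial.coeff_zero_eq_eval_zero, h0, pow_zero, one_mul]
  rw [h2, add_comm]
  congr 1
  rw [← Fin.sum_univ_eq_sum_range (fun i => p.coeff (i + 1) * x ^ (i + 1)) k]
lemma diagonal_mulVec' {N : ℕ} (d x : Fin N → ℂ) :
    (Matrix.diagonal d) *ᵥ x = fun i => d i * x i := by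
  funext i; simp [Matrix.mulVec, dotProduct, Matrix.diagonal]

lemma pow_conj {N : ℕ} (U D : Matrix (Fin N) (Fin N) ℂ) (hU : Uᴴ * U = 1) (n : ℕ) :
    (U * D * Uᴴ) ^ n = U * D ^ n * Uᴴ := by
  have hU' : U * Uᴴ = 1 := mul_eq_one_comm.mp hU
  induction n with
  | zero => simp [hU']
  | succ n ih =>
      rw [pow_succ, ih, pow_succ]
      calc U * D ^ n * Uᴴ * (U * D * Uᴴ) = U * D ^ n * (Uᴴ * U) * D * Uᴴ := by
            noncomm_ring
        _ = U * (D ^ n * D) * Uᴴ := by rw [hU]; noncomm_ring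

lemma aeval_conj {N : ℕ} (U : Matrix (Fin N) (Fin N) ℂ) (lam : Fin N → ℂ)
    (hU : Uᴴ * U = 1) (p : Polynomial ℂ) :
    Polynomial.aeval (U * Matrix.diagonal lam * Uᴴ) p
      = U * Matrix.diagonal (fun i => p.eval (lam i)) * Uᴴ := by
  induction p using Polynomial.induction_on' with
  | add p q hp hq =>
      rw [map_add, hp, hq]
      simp only [Polynomial.eval_add]
      rw [← Matrix.diagonal_add]
      noncomm_ring
  | monomial n c =>
      rw [Polynomial.aeval_monomial, pow_conj U _ hU n, Matrix.diagonal_pow]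
      simp only [Polynomial.eval_monomial]
      have h0 : (fun i => c * lam i ^ n) = c • fun i => lam i ^ n := by
        funext i; simp
      rw [h0, Matrix.diagonal_smul, Algebra.algebraMap_eq_smul_one, smul_mul_assoc, one_mul,
        Matrix.mul_smul, Matrix.smul_mul]
      have h1 : (lam ^ n) = fun i => lam i ^ n := rfl
      rw [h1]

lemma exists_min (N k : ℕ) (hN : 0 < N) (lam : Fin N → ℂ) :
    ∃ a : Fin k → ℂ, ∀ b : Fin k → ℂ,
      ‖(fun _ => (1:ℂ)) + vqL N k lam a‖ ≤ ‖(fun _ => (1:ℂ)) + vqL N k lam b‖ := by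
  set one : Fin N → ℂ := fun _ => 1 with hone
  set S : Submodule ℂ (Fin N → ℂ) := LinearMap.range (vqL N k lam) with hS
  have hSclosed : IsClosed (S : Set (Fin N → ℂ)) := Submodule.closed_of_finiteDimensional S
  set V : Set (Fin N → ℂ) := (fun v => one + v) '' S with hV
  have hVclosed : IsClosed V := by
    have : V = (Homeomorph.addLeft one) '' S := rfl
    rw [this, Homeomorph.isClosed_image]
    exact hSclosed
  have honeV : one ∈ V := ⟨0, Submodule.zero_mem S, by simp⟩
  set K : Set (Fin N → ℂ) := V ∩ Metric.closedBall 0 ‖one‖ with hK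
  have hKcompact : IsCompact K :=
    (isCompact_closedBall 0 ‖one‖).inter_left hVclosed
  have honeK : one ∈ K := ⟨honeV, by simp [Metric.mem_closedBall]⟩
  obtain ⟨vs, hvsK, hmin⟩ := hKcompact.exists_isMinOn ⟨one, honeK⟩
    continuous_norm.continuousOn
  obtain ⟨hvsV, _⟩ := hvsK
  obtain ⟨s0, hs0, hvs⟩ := hvsV
  obtain ⟨a, ha⟩ := hs0
  refine ⟨a, fun b => ?_⟩
  have hva : (one + vqL N k lam a) = vs := by rw [← hvs, ha]
  rw [hva]
  set w : Fin N → ℂ := one + vqL N k lam b with hw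
  have hwV : w ∈ V := ⟨vqL N k lam b, LinearMap.mem_range_self _ b, rfl⟩
  by_cases hcase : ‖w‖ ≤ ‖one‖
  · exact hmin ⟨hwV, by simpa [Metric.mem_closedBall] using hcase⟩
  · calc ‖vs‖ ≤ ‖one‖ := hmin honeK
      _ ≤ ‖w‖ := le_of_not_ge hcase

noncomputable def FL (N k : ℕ) (lam : Fin N → ℂ) (vs : Fin N → ℂ) :
    (Fin k → ℂ) →ₗ[ℝ] (Fin N → ℝ) where
  toFun z := fun i => ((starRingEnd ℂ) (vs i) * vqL N k lam z i).re
  map_add' := by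
    intro z w; funext i
    simp [map_add, mul_add, Complex.add_re]
  map_smul' := by
    intro t z; funext i
    show ((starRingEnd ℂ) (vs i) * vqL N k lam (t • z) i).re
        = t * ((starRingEnd ℂ) (vs i) * vqL N k lam z i).re
    have h1 : vqL N k lam (t • z) = t • vqL N k lam z :=
      map_smul ((vqL N k lam).restrictScalars ℝ) t z
    rw [h1]
    simp only [Pi.smul_apply, Complex.real_smul]
    rw [show (starRingEnd ℂ) (vs i) * ((t:ℂ) * vqL N k lam z i)
        = (t:ℂ) * ((starRingEnd ℂ) (vs i) * vqL N k lam z i) by ring]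
    simp

lemma exists_weights (N k : ℕ) (hN : 0 < N) (lam vs : Fin N → ℂ)
    (E : Finset (Fin N)) (hE : E.Nonempty)
    (hdisj : ¬ ∃ z : Fin k → ℂ, ∀ i ∈ E,
      ((starRingEnd ℂ) (vs i) * vqL N k lam z i).re < 0) :
    ∃ w : Fin N → ℝ, (∀ i, 0 ≤ w i) ∧ (∀ i, i ∉ E → w i = 0) ∧ (0 < ∑ i, w i) ∧
      (∀ z : Fin k → ℂ,
        ∑ i, (w i : ℂ) * ((starRingEnd ℂ) (vs i) * vqL N k lam z i) = 0) := by
  classical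
  set S : Submodule ℝ (Fin N → ℝ) := LinearMap.range (FL N k lam vs) with hS
  set O : Set (Fin N → ℝ) := {x | ∀ i ∈ E, x i < 0} with hO
  have hOopen : IsOpen O := by
    have : O = ⋂ i ∈ E, {x : Fin N → ℝ | x i < 0} := by
      ext x; simp [hO]
    rw [this]
    exact isOpen_biInter_finset fun i _ => isOpen_lt (continuous_apply i) continuous_const
  have hOconv : Convex ℝ O := by
    intro x hx y hy a b ha hb hab
    intro i hi
    have hxi := hx i hi
    have hyi := hy i hi
    simp only [Pi.add_apply, Pi.smul_apply, smul_eq_mul]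
    rcases eq_or_lt_of_le ha with ha0 | ha0
    · have hb1 : b = 1 := by linarith
      rw [← ha0, hb1]; simpa using hyi
    · have h1 : a * x i < 0 := mul_neg_of_pos_of_neg ha0 hxi
      have h2 : b * y i ≤ 0 := mul_nonpos_of_nonneg_of_nonpos hb (le_of_lt hyi)
      linarith
  have hdisj2 : Disjoint O (S : Set (Fin N → ℝ)) := by
    rw [Set.disjoint_left]
    rintro x hxO ⟨z, rfl⟩
    exact hdisj ⟨z, fun i hi => hxO i hi⟩
  obtain ⟨f, u, hfO, hfS⟩ :=
    geometric_hahn_banach_open hOconv hOopen S.convex hdisj2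
  have hu0 : u ≤ 0 := by simpa using hfS 0 S.zero_mem
  have hfS0 : ∀ x ∈ S, f x = 0 := by
    intro x hx
    by_contra hne
    have hmem : ((u - 1) / f x) • x ∈ S := S.smul_mem _ hx
    have h1 := hfS _ hmem
    rw [_root_.map_smul, smul_eq_mul, div_mul_cancel₀ _ hne] at h1
    linarith
  set w : Fin N → ℝ := fun i => f (Pi.single i 1) with hw
  have hfx : ∀ x : Fin N → ℝ, f x = ∑ i, x i * w i := by
    intro x
    have hx := pi_eq_sum_univ x
    calc f x = f (∑ i, x i • fun j => if i = j then (1:ℝ) else 0) := by rw [← hx]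
      _ = ∑ i, x i * w i := by
          rw [map_sum]
          apply Finset.sum_congr rfl
          intro i _
          rw [_root_.map_smul, smul_eq_mul]
          congr 1
          have hg : (fun j => if i = j then (1:ℝ) else 0) = Pi.single i 1 := by
            funext j
            simp [Pi.single_apply, eq_comm]
          rw [hg]
  set indE : Fin N → ℝ := fun i => if i ∈ E then (1:ℝ) else 0 with hind
  have hindO : -indE ∈ O := by
    intro i hi
    simp [hind, hi]
  have hfe : 0 < f indE := by
    have h1 := hfO _ hindO
    rw [map_neg] at h1
    linarith
  set c : ℝ := -u + |f indE| + 1 with hc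
  have hcpos : 0 < c := by
    have := abs_nonneg (f indE)
    simp only [hc]
    linarith
  have hmemO : ∀ (i : Fin N) (α : ℝ), (i ∈ E → α ≤ 0) →
      (α • (Pi.single i (1:ℝ) : Fin N → ℝ) - indE) ∈ O := by
    intro i α hα j hj
    simp only [Pi.sub_apply, Pi.smul_apply, smul_eq_mul, hind]
    rw [if_pos hj]
    rcases eq_or_ne j i with rfl | hne
    · have h1 := hα hj
      rw [Pi.single_eq_same]
      linarith
    · rw [Pi.single_eq_of_ne hne]
      norm_num
  have hfα : ∀ (i : Fin N) (α : ℝ), (i ∈ E → α ≤ 0) → α * w i - f indE < u := by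
    intro i α hα
    have h1 := hfO _ (hmemO i α hα)
    rw [map_sub, _root_.map_smul, smul_eq_mul] at h1
    exact h1
  have habs : f indE ≤ |f indE| := le_abs_self _
  have hwpos : ∀ i, 0 ≤ w i := by
    intro i
    by_contra hneg
    push_neg at hneg
    have hα : i ∈ E → c / w i ≤ 0 := fun _ => le_of_lt (div_neg_of_pos_of_neg hcpos hneg)
    have h2 := hfα i (c / w i) hα
    rw [div_mul_cancel₀ _ (ne_of_lt hneg)] at h2
    simp only [hc] at h2
    linarith
  have hwE : ∀ i, i ∉ E → w i = 0 := by
    intro i hi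
    by_contra hne
    have h2 := hfα i (c / w i) (fun h => absurd h hi)
    rw [div_mul_cancel₀ _ hne] at h2
    simp only [hc] at h2
    linarith
  have hsum : (∑ i, w i) = f indE := by
    rw [hfx indE]
    apply Finset.sum_congr rfl
    intro i _
    by_cases h : i ∈ E
    · simp [hind, h]
    · simp [hind, h, hwE i h]
  have horto : ∀ z : Fin k → ℂ,
      ∑ i, ((starRingEnd ℂ) (vs i) * vqL N k lam z i).re * w i = 0 := by
    intro z
    have hmem : FL N k lam vs z ∈ S := LinearMap.mem_range_self _ z
    have h1 := hfS0 _ hmem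
    rw [hfx] at h1
    exact h1
  refine ⟨w, hwpos, hwE, hsum ▸ hfe, ?_⟩
  intro z
  apply Complex.ext
  · rw [Complex.re_sum]
    simp only [Complex.re_ofReal_mul]
    rw [show ∀ (g : Fin N → ℝ), (∑ i, w i * (((starRingEnd ℂ) (vs i) * vqL N k lam z i
        )).re) = ∑ i, (((starRingEnd ℂ) (vs i) * vqL N k lam z i)).re * w i from
        fun g => Finset.sum_congr rfl fun i _ => mul_comm _ _]
    · rw [horto z, Complex.zero_re]
    · exact w
  · rw [Complex.im_sum, Complex.zero_im]
    have h2 := horto (Complex.I • z)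
    have h3 : ∀ i, ((starRingEnd ℂ) (vs i) * vqL N k lam (Complex.I • z) i).re
        = -(((starRingEnd ℂ) (vs i) * vqL N k lam z i).im) := by
      intro i
      rw [_root_.map_smul]
      simp only [Pi.smul_apply, smul_eq_mul]
      rw [show (starRingEnd ℂ) (vs i) * (Complex.I * vqL N k lam z i)
          = Complex.I * ((starRingEnd ℂ) (vs i) * vqL N k lam z i) by ring]
      rw [Complex.I_mul_re]
    simp only [h3, neg_mul] at h2
    rw [Finset.sum_neg_distrib] at h2
    have h4 : ∑ i, ((w i : ℂ) * ((starRingEnd ℂ) (vs i) * vqL N k lam z i)).im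
        = ∑ i, (((starRingEnd ℂ) (vs i) * vqL N k lam z i)).im * w i := by
      apply Finset.sum_congr rfl
      intro i _
      rw [Complex.mul_im]
      simp [mul_comm]
    rw [h4]
    linarith



lemma no_descent (N k : ℕ) (hN : 0 < N) (lam : Fin N → ℂ) (a : Fin k → ℂ)
    (vs : Fin N → ℂ) (hvs : vs = (fun _ => (1:ℂ)) + vqL N k lam a)
    (hmin : ∀ b, ‖vs‖ ≤ ‖(fun _ => (1:ℂ)) + vqL N k lam b‖)
    (hC : 0 < ‖vs‖) (E : Finset (Fin N))
    (hEdef : ∀ i, i ∈ E ↔ ‖vs i‖ = ‖vs‖) :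
    ¬ ∃ z : Fin k → ℂ, ∀ i ∈ E,
      ((starRingEnd ℂ) (vs i) * vqL N k lam z i).re < 0 := by
  classical
  rintro ⟨z, hz⟩
  haveI : Nonempty (Fin N) := ⟨⟨0, hN⟩⟩
  set C : ℝ := ‖vs‖ with hCdef
  set c : Fin N → ℂ := vqL N k lam z with hc
  set tfun : Fin N → ℝ := fun i =>
    if i ∈ E then -(((starRingEnd ℂ) (vs i) * c i).re) / (‖c i‖ ^ 2 + 1)
    else (C - ‖vs i‖) / (‖c i‖ + 1) with htfun
  have htpos : ∀ i, 0 < tfun i := by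
    intro i
    by_cases hi : i ∈ E
    · have h1 := hz i hi
      simp only [htfun, if_pos hi]
      apply div_pos (by linarith) (by positivity)
    · have h1 : ‖vs i‖ < C := by
        rcases lt_or_eq_of_le (abs_le_norm vs i) with h | h
        · exact h
        · exact absurd ((hEdef i).mpr h) hi
      simp only [htfun, if_neg hi]
      apply div_pos (by linarith) (by positivity)
  set t : ℝ := Finset.univ.inf' Finset.univ_nonempty tfun with ht
  have htpos' : 0 < t := (Finset.lt_inf'_iff _).mpr fun i _ => htpos i
  have htle : ∀ i, t ≤ tfun i := fun i => Finset.inf'_le tfun (Finset.mem_univ i)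
  -- each coordinate strictly below C
  have hkey : ∀ i, ‖vs i + (t:ℂ) * c i‖ < C := by
    intro i
    by_cases hi : i ∈ E
    · have hzi := hz i hi
      have habs : ‖vs i‖ = C := (hEdef i).mp hi
      rw [Complex.norm_def, Real.sqrt_lt' hC]
      rw [Complex.normSq_add]
      have h2 : (vs i * (starRingEnd ℂ) ((t:ℂ) * c i)).re
          = t * ((starRingEnd ℂ) (vs i) * c i).re := by
        rw [_root_.map_mul]
        rw [show vs i * ((starRingEnd ℂ) (t:ℂ) * (starRingEnd ℂ) (c i))
            = (starRingEnd ℂ) (t:ℂ) * (vs i * (starRingEnd ℂ) (c i)) by ring]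
        rw [Complex.conj_ofReal, Complex.re_ofReal_mul]
        congr 1
        rw [show (starRingEnd ℂ) (vs i) * c i
            = (starRingEnd ℂ) (vs i * (starRingEnd ℂ) (c i)) by
          rw [_root_.map_mul, Complex.conj_conj]]
        rw [Complex.conj_re]
      rw [h2]
      have h3 : Complex.normSq (vs i) = C ^ 2 := by
        rw [← Complex.sq_norm, habs]
      have h4 : Complex.normSq ((t:ℂ) * c i) = t ^ 2 * ‖c i‖ ^ 2 := by
        rw [← Complex.sq_norm, norm_mul, Complex.norm_real, Real.norm_eq_abs, mul_pow,
          sq_abs]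
      rw [h3, h4]
      -- need : C^2 + t^2 |c|^2 + 2 t * re < C^2  where re < 0, t ≤ -re/(|c|^2+1)
      set r : ℝ := ((starRingEnd ℂ) (vs i) * c i).re with hr
      have h5 : t ≤ -r / (‖c i‖ ^ 2 + 1) := by
        have h := htle i
        rw [htfun] at h
        simp only [if_pos hi] at h
        exact h
      have h6 : t * (‖c i‖ ^ 2 + 1) ≤ -r := by
        rw [le_div_iff₀ (by positivity)] at h5
        linarith
      nlinarith [htpos', sq_nonneg (‖c i‖)]
    · have h1 : ‖vs i‖ < C := by
        rcases lt_or_eq_of_le (abs_le_norm vs i) with h | h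
        · exact h
        · exact absurd ((hEdef i).mpr h) hi
      have h5 : t ≤ (C - ‖vs i‖) / (‖c i‖ + 1) := by
        have h := htle i
        rw [htfun] at h
        simp only [if_neg hi] at h
        exact h
      calc ‖vs i + (t:ℂ) * c i‖
          ≤ ‖vs i‖ + ‖(t:ℂ) * c i‖ := norm_add_le _ _
        _ = ‖vs i‖ + t * ‖c i‖ := by
            rw [norm_mul, Complex.norm_real, Real.norm_eq_abs, abs_of_pos htpos']
        _ < C := by
            have h6 : t * (‖c i‖ + 1) ≤ C - ‖vs i‖ := by
              rw [le_div_iff₀ (by positivity)] at h5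
              linarith
            nlinarith [norm_nonneg (c i), htpos']
  -- contradiction with minimality
  set b : Fin k → ℂ := a + ((t:ℝ):ℂ) • z with hb
  have hvb : (fun _ => (1:ℂ)) + vqL N k lam b = fun i => vs i + (t:ℂ) * c i := by
    funext i
    simp only [hb, map_add, _root_.map_smul, Pi.add_apply, Pi.smul_apply, smul_eq_mul, hvs, hc]
    ring
  have h7 := hmin b
  rw [hvb] at h7
  obtain ⟨i, hi⟩ := norm_attained hN (fun i => vs i + (t:ℂ) * c i)
  rw [← hi] at h7
  exact absurd (lt_of_le_of_lt h7 (hkey i)) (lt_irrefl C)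
theorem stmt_12 {N : ℕ} (hN : 0 < N) (A U : Matrix (Fin N) (Fin N) ℂ) (lam : Fin N → ℂ)
    (hA : IsUnit A.det) (hnormal : A * Aᴴ = Aᴴ * A)
    (hU : Uᴴ * U = 1) (hdiag : A = U * Matrix.diagonal lam * Uᴴ) (k : ℕ) :
    ∃ r₀ : Fin N → ℂ, r₀ ≠ 0 ∧
      sInf {t | ∃ p : Polynomial ℂ, p.natDegree ≤ k ∧ p.eval 0 = 1 ∧
          t = cenorm ((aeval A p) *ᵥ r₀)} =
        cenorm r₀ *
          sInf {t | ∃ p : Polynomial ℂ, p.natDegree ≤ k ∧ p.eval 0 = 1 ∧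
            t = ⨆ i, ‖p.eval (lam i)‖} := by
  classical
  haveI : Nonempty (Fin N) := ⟨⟨0, hN⟩⟩
  obtain ⟨astar, hmin⟩ := exists_min N k hN lam
  set vs : Fin N → ℂ := (fun _ => (1:ℂ)) + vqL N k lam astar with hvs
  set C : ℝ := ‖vs‖ with hC
  have hval : ∀ (p : Polynomial ℂ), p.natDegree ≤ k → p.eval 0 = 1 →
      ∃ a : Fin k → ℂ, (fun i => p.eval (lam i)) = (fun _ => (1:ℂ)) + vqL N k lam a := by
    intro p hd h0
    refine ⟨fun j => p.coeff ((j:ℕ)+1), ?_⟩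
    funext i
    rw [eval_param hd h0 (lam i)]
    simp [vqL_apply]
  have hvalp : ∀ a : Fin k → ℂ,
      (fun i => (ppoly k a).eval (lam i)) = (fun _ => (1:ℂ)) + vqL N k lam a := by
    intro a; funext i; rw [ppoly_eval]; simp [vqL_apply]
  have hRHS : sInf {t | ∃ p : Polynomial ℂ, p.natDegree ≤ k ∧ p.eval 0 = 1 ∧
      t = ⨆ i, ‖p.eval (lam i)‖} = C := by
    apply le_antisymm
    · apply csInf_le
      · refine ⟨0, ?_⟩
        rintro t ⟨p, hd, h0, rfl⟩
        rw [iSup_abs_eq_norm hN]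
        exact norm_nonneg _
      · refine ⟨ppoly k astar, ppoly_natDegree_le k astar, ppoly_eval_zero k astar, ?_⟩
        rw [iSup_abs_eq_norm hN, hvalp astar, ← hvs]
    · apply le_csInf
      · exact ⟨⨆ i, ‖(ppoly k astar).eval (lam i)‖,
          ppoly k astar, ppoly_natDegree_le k astar, ppoly_eval_zero k astar, rfl⟩
      · rintro t ⟨p, hd, h0, rfl⟩
        obtain ⟨a, ha⟩ := hval p hd h0
        rw [iSup_abs_eq_norm hN, ha]
        exact hmin a
  by_cases hC0 : C = 0
  · refine ⟨fun _ => 1, ?_, ?_⟩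
    · intro h
      have h1 := congrFun h ⟨0, hN⟩
      simp at h1
    · rw [hRHS, hC0, mul_zero]
      have hvs0 : (fun i => (ppoly k astar).eval (lam i)) = 0 := by
        funext i
        have h2 := congrFun (hvalp astar) i
        have h1 : ‖(ppoly k astar).eval (lam i)‖ ≤ C := by
          rw [show (ppoly k astar).eval (lam i) = vs i from by rw [h2, hvs]]
          exact abs_le_norm vs i
        rw [hC0] at h1
        have h0 := norm_nonneg ((ppoly k astar).eval (lam i))
        have h3 : ‖(ppoly k astar).eval (lam i)‖ = 0 := le_antisymm h1 h0
        simpa using h3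
      have lb : ∀ t ∈ {t | ∃ p : Polynomial ℂ, p.natDegree ≤ k ∧ p.eval 0 = 1 ∧
          t = cenorm ((aeval A p) *ᵥ (fun _ => (1:ℂ)))}, (0:ℝ) ≤ t := by
        rintro t ⟨p, _, _, rfl⟩
        exact cenorm_nonneg _
      have hmem : (0:ℝ) ∈ {t | ∃ p : Polynomial ℂ, p.natDegree ≤ k ∧ p.eval 0 = 1 ∧
          t = cenorm ((aeval A p) *ᵥ (fun _ => (1:ℂ)))} := by
        refine ⟨ppoly k astar, ppoly_natDegree_le k astar, ppoly_eval_zero k astar, ?_⟩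
        rw [hdiag, aeval_conj U lam hU, hvs0]
        have hz : Matrix.diagonal (0 : Fin N → ℂ) = 0 := Matrix.diagonal_zero
        rw [hz, Matrix.mul_zero, Matrix.zero_mul, Matrix.zero_mulVec]
        simp [cenorm]
      exact le_antisymm (csInf_le ⟨0, lb⟩ hmem) (le_csInf ⟨0, hmem⟩ lb)
  · have hCpos : 0 < C := (norm_nonneg vs).lt_of_ne (Ne.symm hC0)
    set E : Finset (Fin N) := Finset.univ.filter (fun i => ‖vs i‖ = C) with hE
    have hEdef : ∀ i, i ∈ E ↔ ‖vs i‖ = C := by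
      intro i; simp [hE]
    have hEne : E.Nonempty := by
      obtain ⟨i, hi⟩ := norm_attained hN vs
      exact ⟨i, (hEdef i).mpr hi⟩
    have hdisj := no_descent N k hN lam astar vs hvs hmin hCpos E hEdef
    obtain ⟨w, hw0, hwE, hwsum, horth⟩ := exists_weights N k hN lam vs E hEne hdisj
    set s : ℝ := ∑ i, w i with hs
    have hspos : 0 < s := hwsum
    set wh : Fin N → ℝ := fun i => w i / s with hwh
    have hwh0 : ∀ i, 0 ≤ wh i := fun i => div_nonneg (hw0 i) hspos.le
    have hwhsum : ∑ i, wh i = 1 := by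
      simp only [hwh]
      rw [← Finset.sum_div]
      exact div_self hspos.ne'
    have hwhE : ∀ i, i ∉ E → wh i = 0 := by
      intro i hi; simp only [hwh]; rw [hwE i hi, zero_div]
    have horth' : ∀ z : Fin k → ℂ,
        ∑ i, (wh i : ℂ) * ((starRingEnd ℂ) (vs i) * vqL N k lam z i) = 0 := by
      intro z
      have h2 : ∑ i, (wh i : ℂ) * ((starRingEnd ℂ) (vs i) * vqL N k lam z i)
          = ((s:ℂ))⁻¹ * ∑ i, (w i : ℂ) * ((starRingEnd ℂ) (vs i) * vqL N k lam z i) := by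
        rw [Finset.mul_sum]
        apply Finset.sum_congr rfl
        intro i _
        simp only [hwh]
        rw [Complex.ofReal_div]
        ring
      rw [h2, horth z, mul_zero]
    have hK1 : ∑ i, wh i * (‖vs i‖)^2 = C^2 := by
      have h1 : ∀ i ∈ Finset.univ, wh i * (‖vs i‖)^2 = wh i * C^2 := by
        intro i _
        by_cases hi : i ∈ E
        · rw [(hEdef i).mp hi]
        · rw [hwhE i hi, zero_mul, zero_mul]
      rw [Finset.sum_congr rfl h1, ← Finset.sum_mul, hwhsum, one_mul]
    have hK2 : ∀ a : Fin k → ℂ,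
        ∑ i, (wh i : ℂ) * ((starRingEnd ℂ) (vs i) * (((fun _ => (1:ℂ)) + vqL N k lam a : Fin N → ℂ)) i)
          = ((C^2 : ℝ) : ℂ) := by
      intro a
      have hsplit : ∀ i, (((fun _ => (1:ℂ)) + vqL N k lam a : Fin N → ℂ)) i
          = vs i + vqL N k lam (a - astar) i := by
        intro i
        rw [map_sub]
        simp only [hvs, Pi.add_apply, Pi.sub_apply]
        ring
      have hstep : ∑ i, (wh i : ℂ) * ((starRingEnd ℂ) (vs i) * (((fun _ => (1:ℂ)) + vqL N k lam a : Fin N → ℂ)) i)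
          = (∑ i, (wh i : ℂ) * ((starRingEnd ℂ) (vs i) * vs i))
            + ∑ i, (wh i : ℂ) * ((starRingEnd ℂ) (vs i) * vqL N k lam (a - astar) i) := by
        rw [← Finset.sum_add_distrib]
        apply Finset.sum_congr rfl
        intro i _
        rw [hsplit i]
        ring
      rw [hstep, horth' (a - astar), add_zero]
      have h3 : ∀ i ∈ Finset.univ, (wh i : ℂ) * ((starRingEnd ℂ) (vs i) * vs i)
          = ((wh i * (‖vs i‖)^2 : ℝ) : ℂ) := by
        intro i _
        rw [mul_comm ((starRingEnd ℂ) (vs i)) (vs i), Complex.mul_conj]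
        rw [Complex.ofReal_mul, Complex.ofReal_pow]
        congr 1
        rw [← Complex.sq_norm]
        push_cast
        ring
      rw [Finset.sum_congr rfl h3, ← Complex.ofReal_sum, hK1]
    have hK3 : ∀ a : Fin k → ℂ,
        C^2 ≤ ∑ i, wh i * (‖(((fun _ => (1:ℂ)) + vqL N k lam a : Fin N → ℂ)) i‖)^2 := by
      intro a
      set va : Fin N → ℂ := (fun _ => (1:ℂ)) + vqL N k lam a with hva
      set T : ℝ := ∑ i, wh i * (‖va i‖)^2 with hT
      have hT0 : 0 ≤ T := Finset.sum_nonneg fun i _ =>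
        mul_nonneg (hwh0 i) (sq_nonneg _)
      set G : ℝ := ∑ i, wh i * (‖vs i‖ * ‖va i‖) with hG
      have h1 : C^2 = (∑ i, (wh i : ℂ) * ((starRingEnd ℂ) (vs i) * va i)).re := by
        rw [hva, hK2 a, Complex.ofReal_re]
      have h2 : (∑ i, (wh i : ℂ) * ((starRingEnd ℂ) (vs i) * va i)).re
          ≤ ‖∑ i, (wh i : ℂ) * ((starRingEnd ℂ) (vs i) * va i)‖ :=
        Complex.re_le_norm _
      have h3 : ‖∑ i, (wh i : ℂ) * ((starRingEnd ℂ) (vs i) * va i)‖ ≤ G := by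
        refine le_trans (norm_sum_le _ _) ?_
        apply le_of_eq
        apply Finset.sum_congr rfl
        intro i _
        rw [norm_mul, norm_mul, Complex.norm_real, Real.norm_eq_abs, Complex.norm_conj,
          abs_of_nonneg (hwh0 i)]
      have hCG : C^2 ≤ G := by
        rw [h1]; exact le_trans h2 h3
      have hCS := Finset.sum_mul_sq_le_sq_mul_sq Finset.univ
        (fun i => Real.sqrt (wh i) * ‖vs i‖)
        (fun i => Real.sqrt (wh i) * ‖va i‖)
      have hfg : ∑ i, (Real.sqrt (wh i) * ‖vs i‖)
          * (Real.sqrt (wh i) * ‖va i‖) = G := by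
        apply Finset.sum_congr rfl
        intro i _
        have hss := Real.mul_self_sqrt (hwh0 i)
        linear_combination (‖vs i‖ * ‖va i‖) * hss
      have hf2 : ∑ i, (Real.sqrt (wh i) * ‖vs i‖)^2 = C^2 := by
        rw [← hK1]
        apply Finset.sum_congr rfl
        intro i _
        rw [mul_pow, Real.sq_sqrt (hwh0 i)]
      have hg2 : ∑ i, (Real.sqrt (wh i) * ‖va i‖)^2 = T := by
        rw [hT]
        apply Finset.sum_congr rfl
        intro i _
        rw [mul_pow, Real.sq_sqrt (hwh0 i)]
      rw [hfg, hf2, hg2] at hCS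
      -- C^2 ≤ G, G^2 ≤ C^2 * T  ⟹  C^2 ≤ T
      have h4 : C^2 * C^2 ≤ C^2 * T := by
        calc C^2 * C^2 ≤ G * G := mul_le_mul hCG hCG (sq_nonneg C) (le_trans (sq_nonneg C) hCG)
          _ = G^2 := by ring
          _ ≤ C^2 * T := hCS
      exact le_of_mul_le_mul_left h4 (pow_pos hCpos 2)
    set x : Fin N → ℂ := fun i => ((Real.sqrt (wh i) : ℝ) : ℂ) with hx
    have hxnorm : cenorm x = 1 := by
      unfold cenorm
      have h1 : ∀ i ∈ Finset.univ, ‖x i‖ ^ 2 = wh i := by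
        intro i _
        simp only [hx]
        rw [Complex.norm_real, Real.norm_eq_abs, abs_of_nonneg (Real.sqrt_nonneg _), Real.sq_sqrt (hwh0 i)]
      rw [Finset.sum_congr rfl h1, hwhsum, Real.sqrt_one]
    have hrnorm : cenorm (U *ᵥ x) = 1 := (cenorm_mulVec U hU x).trans hxnorm
    refine ⟨U *ᵥ x, cenorm_eq_zero hrnorm, ?_⟩
    rw [hRHS, hrnorm, one_mul]
    have hcen : ∀ (p : Polynomial ℂ) (a : Fin k → ℂ),
        ((fun i => p.eval (lam i)) = (fun _ => (1:ℂ)) + vqL N k lam a) →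
        cenorm ((aeval A p) *ᵥ (U *ᵥ x))
          = Real.sqrt (∑ i, wh i * (‖(((fun _ => (1:ℂ)) + vqL N k lam a : Fin N → ℂ)) i‖)^2) := by
      intro p a ha
      rw [hdiag, aeval_conj U lam hU p, Matrix.mulVec_mulVec]
      have hmm : U * Matrix.diagonal (fun i => p.eval (lam i)) * Uᴴ * U
          = U * Matrix.diagonal (fun i => p.eval (lam i)) := by
        rw [Matrix.mul_assoc (U * Matrix.diagonal (fun i => p.eval (lam i))) Uᴴ U, hU,
          Matrix.mul_one]
      rw [hmm, ← Matrix.mulVec_mulVec, cenorm_mulVec U hU, diagonal_mulVec']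
      unfold cenorm
      congr 1
      apply Finset.sum_congr rfl
      intro i _
      have hai : p.eval (lam i) = (((fun _ => (1:ℂ)) + vqL N k lam a : Fin N → ℂ)) i := by
        have h5 := congrFun ha i
        simpa using h5
      show ‖p.eval (lam i) * x i‖ ^ 2
          = wh i * (‖(((fun _ => (1:ℂ)) + vqL N k lam a : Fin N → ℂ)) i‖)^2
      rw [hai]
      simp only [hx]
      rw [norm_mul, Complex.norm_real, Real.norm_eq_abs, abs_of_nonneg (Real.sqrt_nonneg _), mul_pow,
        Real.sq_sqrt (hwh0 i)]
      ring
    have lb : ∀ t ∈ {t | ∃ p : Polynomial ℂ, p.natDegree ≤ k ∧ p.eval 0 = 1 ∧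
        t = cenorm ((aeval A p) *ᵥ (U *ᵥ x))}, C ≤ t := by
      rintro t ⟨p, hd, h0, rfl⟩
      obtain ⟨a, ha⟩ := hval p hd h0
      rw [hcen p a ha]
      calc C = Real.sqrt (C^2) := (Real.sqrt_sq hCpos.le).symm
        _ ≤ _ := Real.sqrt_le_sqrt (hK3 a)
    have hmem : C ∈ {t | ∃ p : Polynomial ℂ, p.natDegree ≤ k ∧ p.eval 0 = 1 ∧
        t = cenorm ((aeval A p) *ᵥ (U *ᵥ x))} := by
      refine ⟨ppoly k astar, ppoly_natDegree_le k astar, ppoly_eval_zero k astar, ?_⟩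
      rw [hcen (ppoly k astar) astar (hvalp astar), ← hvs, hK1, Real.sqrt_sq hCpos.le]
    exact le_antisymm
      (csInf_le ⟨C, lb⟩ hmem)
      (le_csInf ⟨C, hmem⟩ lb)
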